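/- arXiv:1304.3622 — 2 statements merged into one kernel-verified Lean document; each statement's English description precedes it below -/
import Mathlib

section
/- For every topological space Y, the coreflection arrow νY → Y (the identity map from Y retopologized with the numerically generated topology to Y) is a weak homotopy equivalence: it induces a bijection on path components and isomorphisms πₙ(νY, y) → πₙ(Y, y) on all homotopy groups for all n ≥ 1 and all basepoints y. -/
open CategoryTheory CategoryTheory.Limits Topology

universe w v u

namespace Paper


/-! ### Numerically generated (Δ-generated) spaces -/

/-- A subset `U` of a topological space `X` is numerically open if for every continuous
map `P : V → X` from an open subset `V` of a Euclidean space, `P ⁻¹' U` is open. -/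
def NumericallyOpen {X : Type u} [TopologicalSpace X] (U : Set X) : Prop :=
  ∀ (n : ℕ) (V : Set (EuclideanSpace ℝ (Fin n))), IsOpen V → ∀ P : C(V, X), IsOpen (⇑P ⁻¹' U)

/-- The topology on (the underlying set of) `X` whose open sets are the numerically
open subsets of `X`; this is the coreflection `ν X`. -/
def nuTop (X : Type u) [TopologicalSpace X] : TopologicalSpace X where
  IsOpen U := NumericallyOpen U
  isOpen_univ := fun _ _ _ P => by simp
  isOpen_inter := fun U₁ U₂ h₁ h₂ n V hV P => by
    rw [Set.preimage_inter]; exact (h₁ n V hV P).inter (h₂ n V hV P)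
  isOpen_sUnion := fun S hS n V hV P => by
    rw [Set.preimage_sUnion]; exact isOpen_biUnion fun U hU => hS U hU n V hV P

/-- A space is numerically generated (equivalently, Δ-generated) if every numerically
open subset is open. -/
def IsNumericallyGenerated (X : Type u) [TopologicalSpace X] : Prop :=
  ∀ U : Set X, NumericallyOpen U → IsOpen U

lemma isOpen_nuTop_iff {X : Type u} [TopologicalSpace X] {U : Set X} :
    IsOpen[nuTop X] U ↔ NumericallyOpen U := Iff.rfl

/-- The numerically generated topology is finer than the original topology; equivalently,
the identity `ν X → X` is continuous. -/
lemma nuTop_le (X : Type u) [t : TopologicalSpace X] : nuTop X ≤ t := by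
  intro U hU
  exact fun n V hV P => hU.preimage P.continuous

/-- Any probe is continuous into the numerically generated topology. -/
lemma continuous_probe_nuTop {X : Type u} [TopologicalSpace X] {n : ℕ}
    {V : Set (EuclideanSpace ℝ (Fin n))} (hV : IsOpen V) (P : C(V, X)) :
    @Continuous _ _ _ (nuTop X) ⇑P :=
  continuous_def.mpr fun U hU => hU n V hV P

/-- The numerically generated topology is idempotent. -/
lemma isNumericallyGenerated_nuTop (X : Type u) [TopologicalSpace X] :
    @IsNumericallyGenerated X (nuTop X) := by
  intro U hU n V hV P
  exact hU n V hV (@ContinuousMap.mk _ _ _ (nuTop X) ⇑P (continuous_probe_nuTop hV P))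

/-- Continuous maps are continuous for the numerically generated topologies. -/
lemma continuous_nuTop_map {X Y : Type u} [TopologicalSpace X] [TopologicalSpace Y]
    (f : C(X, Y)) : @Continuous _ _ (nuTop X) (nuTop Y) ⇑f := by
  rw [@continuous_def _ _ (nuTop X) (nuTop Y)]
  intro U hU n V hV P
  have : ⇑P ⁻¹' (⇑f ⁻¹' U) = ⇑(f.comp P) ⁻¹' U := rfl
  rw [this]
  exact hU n V hV (f.comp P)

end Paper

namespace Paper

/-! ### The category `NG` and the coreflection `ν` -/

/-- The category of numerically generated (Δ-generated) topological spaces,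
as a full subcategory of `Top`. -/
abbrev NGCat : Type (u + 1) :=
  ObjectProperty.FullSubcategory fun X : TopCat.{u} => IsNumericallyGenerated X

/-- The inclusion functor `i : NG → Top`. -/
abbrev ngInclusion : NGCat.{u} ⥤ TopCat.{u} :=
  ObjectProperty.ι _

/-- `X` retopologized with the numerically generated topology, as an object of `NG`. -/
def nuObj (X : TopCat.{u}) : NGCat.{u} :=
  ⟨@TopCat.of X (nuTop X), isNumericallyGenerated_nuTop X⟩

/-- The coreflection functor `ν : Top → NG`. -/
def nuFunctor : TopCat.{u} ⥤ NGCat.{u} where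
  obj X := nuObj X
  map {X Y} f := ⟨@TopCat.ofHom X Y (nuTop X) (nuTop Y)
    (@ContinuousMap.mk _ _ (nuTop X) (nuTop Y) ⇑f (continuous_nuTop_map f.hom))⟩
  map_id := fun X => rfl
  map_comp := fun f g => rfl

end Paper

namespace Paper

/-! ### Weak homotopy equivalences -/

open Topology.Homotopy in
/-- The map on generalized loops induced by a continuous map. -/
def GenLoop.comp {X Y : Type u} [TopologicalSpace X] [TopologicalSpace Y] {N : Type}
    {x : X} (f : C(X, Y)) (p : Ω^ N X x) : Ω^ N Y (f x) :=
  ⟨f.comp p.1, fun y hy => by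
    have := p.2 y hy
    simp [this]⟩

open Topology.Homotopy in
/-- The induced map `f₊ : πₙ(X, x) → πₙ(Y, f x)` on homotopy groups. -/
def HomotopyGroup.map {X Y : Type u} [TopologicalSpace X] [TopologicalSpace Y] {N : Type}
    {x : X} (f : C(X, Y)) :
    HomotopyGroup N X x → HomotopyGroup N Y (f x) :=
  Quotient.map (GenLoop.comp f)
    (fun p q h => h.elim fun H => ⟨H.compContinuousMap f⟩)

/-- A continuous map is a weak homotopy equivalence if it induces a bijection on path
components and isomorphisms on all homotopy groups `πₙ`, `n ≥ 1`, at all basepoints. -/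
structure IsWeakHomotopyEquiv {X Y : Type u} [TopologicalSpace X] [TopologicalSpace Y]
    (f : C(X, Y)) : Prop where
  surj_pi0 : ∀ y : Y, ∃ x : X, Joined (f x) y
  inj_pi0 : ∀ x₁ x₂ : X, Joined (f x₁) (f x₂) → Joined x₁ x₂
  bij_pi : ∀ n : ℕ, 1 ≤ n → ∀ x : X,
    Function.Bijective
      (HomotopyGroup.map f : HomotopyGroup (Fin n) X x → HomotopyGroup (Fin n) Y (f x))

/-- A morphism of `Top` is a weak homotopy equivalence. -/
def TopIsWeakHomotopyEquiv : MorphismProperty TopCat.{u} :=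
  fun X Y f => IsWeakHomotopyEquiv (X := X) (Y := Y) ⟨⇑f, f.hom.continuous⟩

end Paper

namespace Paper

/-! ### The generating cofibrations and trivial cofibrations of `Top` -/

/-- The `n`-sphere with an integer index, as in the older Mathlib: the unit sphere in
`ℝ^{(n+1).toNat}` (so `sphereZ (-1)` is empty). -/
noncomputable def sphereZ (n : ℤ) : TopCat.{u} :=
  TopCat.of <| ULift <| Metric.sphere (0 : EuclideanSpace ℝ <| Fin <| Int.toNat <| n + 1) 1

/-- The `n`-disk with an integer index, as in the older Mathlib. -/
noncomputable def diskZ (n : ℤ) : TopCat.{u} :=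
  TopCat.of <| ULift <| Metric.closedBall (0 : EuclideanSpace ℝ <| Fin <| Int.toNat n) 1

/-- The boundary inclusion `sphereZ n ⟶ diskZ (n + 1)`, as in the older Mathlib. -/
def sphereInclusionZ (n : ℤ) : sphereZ.{u} n ⟶ diskZ.{u} (n + 1) :=
  TopCat.ofHom
    { toFun := fun ⟨p, hp⟩ ↦ ⟨p, le_of_eq hp⟩
      continuous_toFun := ⟨fun t ⟨s, ⟨r, hro, hrs⟩, hst⟩ ↦ by
        rw [isOpen_induced_iff, ← hst, ← hrs]
        tauto⟩ }

open scoped TopCat in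
/-- The cylinder `Dⁿ × [0, 1]` on the `n`-disk. -/
noncomputable def diskCyl (n : ℕ) : TopCat.{u} :=
  TopCat.of ((diskZ.{u} (n : ℤ)) × unitInterval)

open scoped TopCat in
/-- The inclusion `Dⁿ × {0} → Dⁿ × [0, 1]`. -/
noncomputable def diskCylInclusion (n : ℕ) : diskZ (n : ℤ) ⟶ diskCyl.{u} n :=
  TopCat.ofHom ⟨fun x => (x, 0), continuous_id.prodMk continuous_const⟩

open scoped TopCat in
/-- The set `I = {Sⁿ⁻¹ → Dⁿ | n ≥ 0}` of boundary inclusions, the generating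
cofibrations of the standard model structure on `Top` (Hovey 2.4.19). -/
noncomputable def topI : MorphismProperty TopCat.{u} :=
  fun X Y f => ∃ n : ℕ, ∃ hX : X = sphereZ ((n : ℤ) - 1), ∃ hY : Y = diskZ (n : ℤ),
    f = eqToHom hX ≫ sphereInclusionZ ((n : ℤ) - 1) ≫
      eqToHom (show diskZ ((n : ℤ) - 1 + 1) = Y by rw [sub_add_cancel]; exact hY.symm)

open scoped TopCat in
/-- The set `J = {Dⁿ × {0} → Dⁿ × [0,1] | n ≥ 0}` of inclusions, the generating trivial
cofibrations of the standard model structure on `Top` (Hovey 2.4.19). -/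
noncomputable def topJ : MorphismProperty TopCat.{u} :=
  fun X Y f => ∃ n : ℕ, ∃ hX : X = diskZ (n : ℤ), ∃ hY : Y = diskCyl.{u} n,
    f = eqToHom hX ≫ diskCylInclusion n ≫ eqToHom hY.symm



open Topology.Homotopy in
lemma continuous_nuTop_of_retract {Y : Type u} [TopologicalSpace Y] {Z : Type} [TopologicalSpace Z]
    {n : ℕ} (e : Z → EuclideanSpace ℝ (Fin n)) (he : Continuous e)
    (r : EuclideanSpace ℝ (Fin n) → Z) (hr : Continuous r) (hre : ∀ z, r (e z) = z)
    (f : C(Z, Y)) : @Continuous Z Y _ (nuTop Y) ⇑f := by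
  rw [@continuous_def _ _ _ (nuTop Y)]
  intro U hU
  set P : C((Set.univ : Set (EuclideanSpace ℝ (Fin n))), Y) :=
    ⟨fun v => f (r v.1), (f.continuous.comp hr).comp continuous_subtype_val⟩ with hP
  have hopen : IsOpen (⇑P ⁻¹' U) := hU n Set.univ isOpen_univ P
  have key : ⇑f ⁻¹' U =
      (fun z => (⟨e z, trivial⟩ : (Set.univ : Set (EuclideanSpace ℝ (Fin n))))) ⁻¹' (⇑P ⁻¹' U) := by
    ext z
    simp [hP, hre z]
  rw [key]
  exact hopen.preimage (he.subtype_mk _)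

lemma continuous_nuTop_interval {Y : Type u} [TopologicalSpace Y] (f : C(unitInterval, Y)) :
    @Continuous unitInterval Y _ (nuTop Y) ⇑f := by
  refine continuous_nuTop_of_retract (Z := unitInterval) (n := 1)
    (fun x => (WithLp.toLp 2 (fun _ => (x : ℝ)) : EuclideanSpace ℝ (Fin 1))) ?_
    (fun v => Set.projIcc 0 1 zero_le_one (v 0)) ?_ ?_ f
  · exact (PiLp.continuous_toLp 2 _).comp (continuous_pi fun _ => continuous_subtype_val)
  · exact continuous_projIcc.comp (PiLp.continuous_apply 2 _ 0)
  · intro z; exact Set.projIcc_val zero_le_one z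

lemma continuous_nuTop_cube {Y : Type u} [TopologicalSpace Y] {n : ℕ}
    (f : C((Fin n → unitInterval), Y)) :
    @Continuous _ Y _ (nuTop Y) ⇑f := by
  refine continuous_nuTop_of_retract (Z := Fin n → unitInterval) (n := n)
    (fun x => (WithLp.toLp 2 (fun i => (x i : ℝ)) : EuclideanSpace ℝ (Fin n))) ?_
    (fun v i => Set.projIcc 0 1 zero_le_one (v i)) ?_ ?_ f
  · exact (PiLp.continuous_toLp 2 _).comp (continuous_pi fun i => continuous_subtype_val.comp (continuous_apply i))
  · exact continuous_pi fun i => continuous_projIcc.comp (PiLp.continuous_apply 2 _ i)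
  · intro z; funext i; exact Set.projIcc_val zero_le_one (z i)

lemma continuous_nuTop_cyl {Y : Type u} [TopologicalSpace Y] {n : ℕ}
    (f : C(unitInterval × (Fin n → unitInterval), Y)) :
    @Continuous _ Y _ (nuTop Y) ⇑f := by
  refine continuous_nuTop_of_retract (Z := unitInterval × (Fin n → unitInterval)) (n := n + 1)
    (fun p => (WithLp.toLp 2 (Fin.cons (p.1 : ℝ) (fun j => (p.2 j : ℝ))) : EuclideanSpace ℝ (Fin (n+1)))) ?_
    (fun v => (Set.projIcc 0 1 zero_le_one (v 0),
      fun j => Set.projIcc 0 1 zero_le_one (v j.succ))) ?_ ?_ f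
  · refine (PiLp.continuous_toLp 2 _).comp (continuous_pi fun i => ?_)
    refine Fin.cases ?_ (fun j => ?_) i
    · simpa [Function.comp_def] using continuous_subtype_val.comp continuous_fst
    · simpa [Function.comp_def] using continuous_subtype_val.comp ((continuous_apply j).comp continuous_snd)
  · exact (continuous_projIcc.comp (PiLp.continuous_apply 2 _ 0)).prodMk
      (continuous_pi fun j => continuous_projIcc.comp (PiLp.continuous_apply 2 _ j.succ))
  · rintro ⟨t, x⟩
    simp only [PiLp.toLp_apply, Fin.cons_zero, Fin.cons_succ]
    exact Prod.ext (Set.projIcc_val zero_le_one t) (funext fun j => Set.projIcc_val zero_le_one (x j))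

lemma continuous_of_nuTop {Y : Type u} [t : TopologicalSpace Y] {Z : Type} [TopologicalSpace Z]
    {g : Z → Y} (h : @Continuous Z Y _ (nuTop Y) g) : @Continuous Z Y _ t g := by
  rw [continuous_def]
  intro U hU
  exact (@continuous_def _ _ _ (nuTop Y)).1 h U (nuTop_le Y U hU)

lemma homotopicRel_nuTop {Y : Type u} [t : TopologicalSpace Y] {n : ℕ}
    (f₀ f₁ : @ContinuousMap (Fin n → unitInterval) Y _ (nuTop Y)) (S : Set (Fin n → unitInterval))
    (h : @ContinuousMap.HomotopicRel _ Y _ t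
      (@ContinuousMap.mk _ _ _ t (@ContinuousMap.toFun _ Y _ (nuTop Y) f₀)
        (continuous_of_nuTop (@ContinuousMap.continuous_toFun _ Y _ (nuTop Y) f₀)))
      (@ContinuousMap.mk _ _ _ t (@ContinuousMap.toFun _ Y _ (nuTop Y) f₁)
        (continuous_of_nuTop (@ContinuousMap.continuous_toFun _ Y _ (nuTop Y) f₁))) S) :
    @ContinuousMap.HomotopicRel _ Y _ (nuTop Y) f₀ f₁ S := by
  obtain ⟨H⟩ := h
  refine ⟨@ContinuousMap.HomotopyWith.mk _ _ _ (nuTop Y) f₀ f₁ _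
    (@ContinuousMap.Homotopy.mk _ _ _ (nuTop Y) f₀ f₁
      (@ContinuousMap.mk _ _ _ (nuTop Y) H.toFun
        (continuous_nuTop_cyl ⟨H.toFun, H.continuous_toFun⟩))
      (fun z => H.map_zero_left z) (fun z => H.map_one_left z))
    (fun s z hz => H.prop' s z hz)⟩

/-- For every topological space `Y`, the coreflection arrow `ν Y → Y`
(the identity map of `Y`, from the numerically generated topology to the original one)
is a weak homotopy equivalence. -/
theorem nu_counit_is_weak_homotopy_equiv (Y : Type u) [t : TopologicalSpace Y] :
    @IsWeakHomotopyEquiv Y Y (nuTop Y) t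
      (@ContinuousMap.mk _ _ (nuTop Y) t id (continuous_id_iff_le.mpr (nuTop_le Y))) := by
  set f : @ContinuousMap Y Y (nuTop Y) t :=
    @ContinuousMap.mk _ _ (nuTop Y) t id (continuous_id_iff_le.mpr (nuTop_le Y)) with hf
  refine @IsWeakHomotopyEquiv.mk Y Y (nuTop Y) t f ?_ ?_ ?_
  · intro y
    exact ⟨y, Joined.refl y⟩
  · intro x₁ x₂ h
    obtain ⟨γ⟩ := h
    exact ⟨@Path.mk Y (nuTop Y) x₁ x₂
      (@ContinuousMap.mk _ _ _ (nuTop Y) ⇑γ (continuous_nuTop_interval γ.toContinuousMap))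
      γ.source' γ.target'⟩
  · intro n _ x
    constructor
    · intro a b hab
      refine Quotient.inductionOn₂ a b (fun p q hpq => ?_) hab
      have h : @ContinuousMap.HomotopicRel _ Y _ t
          (@ContinuousMap.mk _ _ _ t (@ContinuousMap.toFun _ Y _ (nuTop Y) p.1)
            (continuous_of_nuTop (@ContinuousMap.continuous_toFun _ Y _ (nuTop Y) p.1)))
          (@ContinuousMap.mk _ _ _ t (@ContinuousMap.toFun _ Y _ (nuTop Y) q.1)
            (continuous_of_nuTop (@ContinuousMap.continuous_toFun _ Y _ (nuTop Y) q.1)))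
          (Cube.boundary (Fin n)) :=
        Quotient.exact (by simp only [HomotopyGroup.map, Quotient.map_mk] at hpq; exact hpq)
      exact Quotient.sound (homotopicRel_nuTop p.1 q.1 _ h)
    · intro b
      refine Quotient.inductionOn b (fun p => ?_)
      refine ⟨Quotient.mk _ (⟨@ContinuousMap.mk _ _ _ (nuTop Y) ⇑p.1
        (continuous_nuTop_cube p.1), p.2⟩ : @GenLoop (Fin n) Y (nuTop Y) x), ?_⟩
      simp only [HomotopyGroup.map, Quotient.map_mk]
      exact congrArg (Quotient.mk _) (Subtype.ext (ContinuousMap.ext fun _ => rfl))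


end Paper
end

section
/- Let D be a cofibrantly generated model category with generating cofibrations I and generating trivial cofibrations J, and let C be a complete and cocomplete full coreflective subcategory of D satisfying: the unit η : X → GX is a natural isomorphism and every map in I and J is a morphism between objects of C. Write I_C-cell and J_C-cell for the relative I-cell and J-cell complexes whose maps lie in C, I_C-cof and J_C-cof for the maps of C with the left lifting property with respect to the I-injective (resp. J-injective) maps of C, I_C-inj and J_C-inj for the I-injective and J-injective maps of C, and W_C for the morphisms of C that are weak equivalences in D. Then: (i) every map in J_C-cell lies in W_C ∩ I_C-cof; (ii) I_C-inj ⊆ W_C ∩ J_C-inj; and (iii) W_C ∩ J_C-inj ⊆ I_C-inj (equivalently W_C ∩ I_C-cof ⊆ J_C-cof). -/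
open CategoryTheory CategoryTheory.Limits

universe w v u

namespace Paper

variable {D : Type u} [Category.{v} D]

/-- `f` is a retract of `g` (in the arrow category). -/
def IsRetract {X Y X' Y' : D} (f : X ⟶ Y) (g : X' ⟶ Y') : Prop :=
  ∃ (i : Arrow.mk f ⟶ Arrow.mk g) (r : Arrow.mk g ⟶ Arrow.mk f), i ≫ r = 𝟙 _

/-- The class of maps with the left lifting property with respect to `T`. -/
def llp (T : MorphismProperty D) : MorphismProperty D :=
  fun _ _ f => ∀ ⦃X Y : D⦄ (p : X ⟶ Y), T p → HasLiftingProperty f p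

/-- The class of `T`-injective maps, i.e. maps with the right lifting property
with respect to `T`. -/
def rlp (T : MorphismProperty D) : MorphismProperty D :=
  fun _ _ p => ∀ ⦃A B : D⦄ (f : A ⟶ B), T f → HasLiftingProperty f p

/-- `g` is a pushout of some map of `I`. -/
def pushouts (I : MorphismProperty D) : MorphismProperty D :=
  fun X Y g => ∃ (A B : D) (f : A ⟶ B) (u : A ⟶ X) (v : B ⟶ Y),
    I f ∧ IsPushout u f g v

section Sequences

variable {J : Type w} [Preorder J]

/-- The restriction of `F : J ⥤ D` to `{j | j < i}`. -/
def restrictLT (F : J ⥤ D) (i : J) : Set.Iio i ⥤ D :=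
  (Subtype.mono_coe _).functor ⋙ F

/-- The cocone over the restriction of `F` to `{j | j < i}` whose point is `F.obj i`. -/
def coconeLT (F : J ⥤ D) (i : J) : Cocone (restrictLT F i) where
  pt := F.obj i
  ι :=
    { app := fun k => F.map (homOfLE k.2.le)
      naturality := fun k l φ => by
        dsimp [restrictLT]
        erw [← F.map_comp, Category.comp_id]
        rfl }

/-- A functor `F` indexed by a well-ordered set is a sequence of maps of `K`:
each successor step belongs to `K`, and `F` is continuous at limit elements. -/
structure IsSequenceIn (K : MorphismProperty D) [SuccOrder J] (F : J ⥤ D) : Prop where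
  succ_mem : ∀ i : J, ¬ IsMax i → K (F.map (homOfLE (Order.le_succ i)))
  smooth : ∀ i : J, Order.IsSuccLimit i → Nonempty (IsColimit (coconeLT F i))

end Sequences

/-- The data exhibiting `f` as a transfinite composition of maps of `K`:
a sequence of maps of `K` indexed by a well-ordered set, starting at the domain of `f`,
whose colimit is the codomain of `f`. -/
structure TransfiniteCompositionData (K : MorphismProperty D) {X Y : D} (f : X ⟶ Y) where
  J : Type v
  [instLinearOrder : LinearOrder J]
  [instOrderBot : OrderBot J]
  [instSuccOrder : SuccOrder J]
  [instWellFoundedLT : WellFoundedLT J]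
  F : J ⥤ D
  seq : IsSequenceIn K F
  isoBot : F.obj ⊥ ≅ X
  c : Cocone F
  isColimit : IsColimit c
  isoTop : c.pt ≅ Y
  fac : f = isoBot.inv ≫ c.ι.app ⊥ ≫ isoTop.hom

/-- The class of transfinite compositions of pushouts of maps of `I`; this is the class
of relative `I`-cell complexes (`I`-cell). -/
def cell (I : MorphismProperty D) : MorphismProperty D :=
  fun _ _ f => Nonempty (TransfiniteCompositionData (pushouts I) f)

/-- The canonical map `colim Hom(A, F -) ⟶ Hom(A, c.pt)` is bijective: every map
`A ⟶ c.pt` factors through some stage, and two maps to a stage which become equal in the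
colimit are identified at some later stage. -/
def HomColimCommutes (A : D) {J : Type w} [Preorder J] (F : J ⥤ D) (c : Cocone F) : Prop :=
  (∀ g : A ⟶ c.pt, ∃ (j : J) (h : A ⟶ F.obj j), h ≫ c.ι.app j = g) ∧
  (∀ (j : J) (h₁ h₂ : A ⟶ F.obj j), h₁ ≫ c.ι.app j = h₂ ≫ c.ι.app j →
     ∃ (j' : J) (k : j ⟶ j'), h₁ ≫ F.map k = h₂ ≫ F.map k)

/-- `A` is `κ`-small relative to `K` (Hovey 2.1.3): for every `κ`-filtered well-ordered
set `J` and every `J`-indexed sequence of maps of `K`, the functor `Hom(A, -)` commutes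
with the colimit of the sequence. -/
def IsSmallRelTo (A : D) (K : MorphismProperty D) (κ : Cardinal.{v}) : Prop :=
  ∀ (J : Type v) [LinearOrder J] [OrderBot J] [SuccOrder J] [WellFoundedLT J] [NoMaxOrder J],
    (∀ s : Set J, Cardinal.mk s ≤ κ → BddAbove s) →
    ∀ (F : J ⥤ D), IsSequenceIn K F →
      ∀ (c : Cocone F), IsColimit c → HomColimCommutes A F c

/-- `A` is small relative to `K` if it is `κ`-small relative to `K`
for some regular cardinal `κ`. -/
def IsSmallRel (A : D) (K : MorphismProperty D) : Prop :=
  ∃ κ : Cardinal.{v}, κ.IsRegular ∧ IsSmallRelTo A K κ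

/-- `A` is finite relative to `K` (Hovey 2.1.4): `Hom(A, -)` commutes with colimits of
arbitrary `K`-sequences indexed by limit-type well-ordered sets. -/
def IsFiniteRel (A : D) (K : MorphismProperty D) : Prop :=
  ∀ (J : Type v) [LinearOrder J] [OrderBot J] [SuccOrder J] [WellFoundedLT J] [NoMaxOrder J],
    ∀ (F : J ⥤ D), IsSequenceIn K F →
      ∀ (c : Cocone F), IsColimit c → HomColimCommutes A F c

/-- A model structure on a category `D` (Hovey 1.1.3, without the functoriality
of the factorizations): classes of weak equivalences, fibrations and cofibrations
satisfying the two-out-of-three, retract, lifting and factorization axioms. -/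
structure ModelStructure (D : Type u) [Category.{v} D] where
  W : MorphismProperty D
  Fib : MorphismProperty D
  Cof : MorphismProperty D
  w_comp : ∀ {X Y Z : D} (f : X ⟶ Y) (g : Y ⟶ Z), W f → W g → W (f ≫ g)
  w_cancel_left : ∀ {X Y Z : D} (f : X ⟶ Y) (g : Y ⟶ Z), W f → W (f ≫ g) → W g
  w_cancel_right : ∀ {X Y Z : D} (f : X ⟶ Y) (g : Y ⟶ Z), W g → W (f ≫ g) → W f
  w_retract : ∀ {X Y X' Y' : D} (f : X ⟶ Y) (g : X' ⟶ Y'), IsRetract f g → W g → W f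
  fib_retract : ∀ {X Y X' Y' : D} (f : X ⟶ Y) (g : X' ⟶ Y'), IsRetract f g → Fib g → Fib f
  cof_retract : ∀ {X Y X' Y' : D} (f : X ⟶ Y) (g : X' ⟶ Y'), IsRetract f g → Cof g → Cof f
  lift_cof_trivFib : ∀ {A B X Y : D} (i : A ⟶ B) (p : X ⟶ Y),
    Cof i → Fib p → W p → HasLiftingProperty i p
  lift_trivCof_fib : ∀ {A B X Y : D} (i : A ⟶ B) (p : X ⟶ Y),
    Cof i → W i → Fib p → HasLiftingProperty i p
  fact_cof_trivFib : ∀ {X Y : D} (f : X ⟶ Y),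
    ∃ (Z : D) (i : X ⟶ Z) (p : Z ⟶ Y), Cof i ∧ Fib p ∧ W p ∧ i ≫ p = f
  fact_trivCof_fib : ∀ {X Y : D} (f : X ⟶ Y),
    ∃ (Z : D) (i : X ⟶ Z) (p : Z ⟶ Y), Cof i ∧ W i ∧ Fib p ∧ i ≫ p = f

/-- A model structure is cofibrantly generated by sets `I` and `J` (Hovey 2.1.17) if the
domains of `I` (resp. `J`) are small relative to relative `I`-cell (resp. `J`-cell)
complexes, the fibrations are the `J`-injective maps and the trivial fibrations are the
`I`-injective maps. -/
structure CofibrantlyGenerated (M : ModelStructure D) (I J : MorphismProperty D) : Prop where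
  small_I : ∀ {A B : D} (f : A ⟶ B), I f → IsSmallRel A (cell I)
  small_J : ∀ {A B : D} (f : A ⟶ B), J f → IsSmallRel A (cell J)
  fib_eq : ∀ {X Y : D} (p : X ⟶ Y), M.Fib p ↔ rlp J p
  trivFib_eq : ∀ {X Y : D} (p : X ⟶ Y), (M.Fib p ∧ M.W p) ↔ rlp I p

/-- A cofibrantly generated model structure is finitely generated (Hovey 2.1.17) if
moreover the domains and codomains of `I` and `J` are finite relative to `I`-cell. -/
structure FinitelyGenerated (M : ModelStructure D) (I J : MorphismProperty D) extends
    CofibrantlyGenerated M I J : Prop where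
  finite_I : ∀ {A B : D} (f : A ⟶ B), I f → IsFiniteRel A (cell I) ∧ IsFiniteRel B (cell I)
  finite_J : ∀ {A B : D} (f : A ⟶ B), J f → IsFiniteRel A (cell I) ∧ IsFiniteRel B (cell I)

section Quillen

variable {C : Type u} [Category.{v} C]

/-- An adjunction `F ⊣ G` is a Quillen adjunction (Hovey 1.3.1) if the left adjoint `F`
preserves cofibrations and trivial cofibrations. -/
def IsQuillenAdjunction (MC : ModelStructure C) (MD : ModelStructure D)
    (F : C ⥤ D) (G : D ⥤ C) (_ : F ⊣ G) : Prop :=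
  (∀ {A B : C} (f : A ⟶ B), MC.Cof f → MD.Cof (F.map f)) ∧
  (∀ {A B : C} (f : A ⟶ B), MC.Cof f → MC.W f → MD.Cof (F.map f) ∧ MD.W (F.map f))

/-- An object is cofibrant if the map from the initial object to it is a cofibration. -/
def Cofibrant (M : ModelStructure D) [HasInitial D] (X : D) : Prop :=
  M.Cof (initial.to X)

/-- An object is fibrant if the map from it to the terminal object is a fibration. -/
def Fibrant (M : ModelStructure D) [HasTerminal D] (X : D) : Prop :=
  M.Fib (terminal.from X)

/-- A Quillen adjunction `F ⊣ G` is a Quillen equivalence (Hovey 1.3.12) if for every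
cofibrant `X` and fibrant `Y`, a map `F X ⟶ Y` is a weak equivalence if and only if its
adjoint `X ⟶ G Y` is one. -/
def IsQuillenEquivalence (MC : ModelStructure C) (MD : ModelStructure D)
    [HasInitial C] [HasTerminal D]
    (F : C ⥤ D) (G : D ⥤ C) (adj : F ⊣ G) : Prop :=
  IsQuillenAdjunction MC MD F G adj ∧
  ∀ (X : C) (Y : D), Cofibrant MC X → Fibrant MD Y →
    ∀ f : F.obj X ⟶ Y, (MD.W f ↔ MC.W (adj.homEquiv X Y f))

end Quillen

/-- The restriction of a class of maps of `D` to a full subcategory. -/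
def restrict (P : D → Prop) (K : MorphismProperty D) : MorphismProperty (ObjectProperty.FullSubcategory P) :=
  fun _ _ f => K ((ObjectProperty.ι P).map f)


section Aux

variable {E : Type u} [Category.{v} E]

lemma hlp_of_isPushout {A B X Y Xp Yp : E} {u : A ⟶ X} {f : A ⟶ B} {g : X ⟶ Y} {v : B ⟶ Y}
    (h : IsPushout u f g v) (p : Xp ⟶ Yp) (hf : HasLiftingProperty f p) :
    HasLiftingProperty g p := by
  constructor
  intro t b sq
  have sq2 : CommSq (u ≫ t) f p (v ≫ b) :=
    ⟨by rw [Category.assoc, sq.w, ← Category.assoc, h.w, Category.assoc]⟩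
  obtain ⟨hl⟩ := (hf.sq_hasLift sq2).exists_lift
  refine CommSq.HasLift.mk' ⟨h.desc t hl.l hl.fac_left.symm, h.inl_desc _ _ _, ?_⟩
  apply h.hom_ext
  · rw [← Category.assoc, h.inl_desc, sq.w]
  · rw [← Category.assoc, h.inr_desc, hl.fac_right]

lemma hlp_of_transfinite {K : MorphismProperty E} {X Y : E} {f : X ⟶ Y}
    (d : TransfiniteCompositionData K f) {Xp Yp : E} (p : Xp ⟶ Yp)
    (hK : ∀ ⦃A B : E⦄ (g : A ⟶ B), K g → HasLiftingProperty g p) :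
    HasLiftingProperty f p := by
  letI := d.instLinearOrder
  letI := d.instOrderBot
  letI := d.instSuccOrder
  letI := d.instWellFoundedLT
  have main : HasLiftingProperty (d.c.ι.app ⊥) p := by
    constructor
    intro sqt sqb sq
    classical
    let Good : Set (Set (Σ j : d.J, d.F.obj j ⟶ Xp)) := {A |
      (⟨⊥, sqt⟩ : Σ j : d.J, d.F.obj j ⟶ Xp) ∈ A ∧
      (∀ (j : d.J) (g g' : d.F.obj j ⟶ Xp),
        (⟨j, g⟩ : Σ j : d.J, d.F.obj j ⟶ Xp) ∈ A →
        (⟨j, g'⟩ : Σ j : d.J, d.F.obj j ⟶ Xp) ∈ A → g = g') ∧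
      (∀ (j : d.J) (g : d.F.obj j ⟶ Xp), (⟨j, g⟩ : Σ j : d.J, d.F.obj j ⟶ Xp) ∈ A →
        ∀ (k : d.J) (hkj : k ≤ j),
          (⟨k, d.F.map (homOfLE hkj) ≫ g⟩ : Σ j : d.J, d.F.obj j ⟶ Xp) ∈ A) ∧
      (∀ (j : d.J) (g : d.F.obj j ⟶ Xp), (⟨j, g⟩ : Σ j : d.J, d.F.obj j ⟶ Xp) ∈ A →
        g ≫ p = d.c.ι.app j ≫ sqb)}
    have funEq : ∀ {j : d.J} {g g' : d.F.obj j ⟶ Xp},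
        (⟨j, g⟩ : Σ j : d.J, d.F.obj j ⟶ Xp) = ⟨j, g'⟩ → g = g' := by
      intro j g g' h
      simpa using h
    have hA0 : ({⟨⊥, sqt⟩} : Set (Σ j : d.J, d.F.obj j ⟶ Xp)) ∈ Good := by
      refine ⟨rfl, ?_, ?_, ?_⟩
      · intro j g g' hg hg'
        exact funEq ((Set.mem_singleton_iff.mp hg).trans (Set.mem_singleton_iff.mp hg').symm)
      · intro j g hg k hkj
        have hg' := Set.mem_singleton_iff.mp hg
        injection hg' with h1 h2
        subst h1
        obtain rfl := eq_of_heq h2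
        obtain rfl : k = ⊥ := le_bot_iff.mp hkj
        have he : d.F.map (homOfLE hkj) = 𝟙 _ := by
          rw [Subsingleton.elim (homOfLE hkj) (𝟙 (⊥ : d.J)), d.F.map_id]
        rw [he, Category.id_comp]
        rfl
      · intro j g hg
        have hg' := Set.mem_singleton_iff.mp hg
        injection hg' with h1 h2
        subst h1
        obtain rfl := eq_of_heq h2
        exact sq.w
    obtain ⟨m, -, hmax⟩ := zorn_subset_nonempty Good (fun ch hchG hch hchne => by
      refine ⟨⋃₀ ch, ⟨?_, ?_, ?_, ?_⟩, fun s hs => Set.subset_sUnion_of_mem hs⟩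
      · obtain ⟨s, hs⟩ := hchne
        exact ⟨s, hs, (hchG hs).1⟩
      · rintro j g g' ⟨s1, hs1, hgs1⟩ ⟨s2, hs2, hgs2⟩
        rcases hch.total hs1 hs2 with h | h
        · exact (hchG hs2).2.1 j g g' (h hgs1) hgs2
        · exact (hchG hs1).2.1 j g g' hgs1 (h hgs2)
      · rintro j g ⟨s1, hs1, hgs1⟩ k hkj
        exact ⟨s1, hs1, (hchG hs1).2.2.1 j g hgs1 k hkj⟩
      · rintro j g ⟨s1, hs1, hgs1⟩
        exact (hchG hs1).2.2.2 j g hgs1) {⟨⊥, sqt⟩} hA0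
    obtain ⟨mbase, mfun, mcompat, mover⟩ := hmax.1
    have hext : ∀ (j : d.J) (gj : d.F.obj j ⟶ Xp),
        (∀ (k : d.J) (hkj : k < j),
          (⟨k, d.F.map (homOfLE hkj.le) ≫ gj⟩ : Σ j : d.J, d.F.obj j ⟶ Xp) ∈ m) →
        gj ≫ p = d.c.ι.app j ≫ sqb →
        ∃ g : d.F.obj j ⟶ Xp, (⟨j, g⟩ : Σ j : d.J, d.F.obj j ⟶ Xp) ∈ m := by
      intro j gj hstep hover
      by_cases hex : ∃ g : d.F.obj j ⟶ Xp, (⟨j, g⟩ : Σ j : d.J, d.F.obj j ⟶ Xp) ∈ m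
      · exact hex
      have hgood : insert (⟨j, gj⟩ : Σ j : d.J, d.F.obj j ⟶ Xp) m ∈ Good := by
        refine ⟨Set.mem_insert_of_mem _ mbase, ?_, ?_, ?_⟩
        · rintro j' g g' (hg | hg) (hg' | hg')
          · injection hg with h1 h2
            subst h1
            obtain rfl := eq_of_heq h2
            exact (funEq hg').symm
          · injection hg with h1 h2
            subst h1
            exact absurd ⟨g', hg'⟩ hex
          · injection hg' with h1 h2
            subst h1
            exact absurd ⟨g, hg⟩ hex
          · exact mfun j' g g' hg hg'
        · rintro j' g (hg | hg) k hkj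
          · injection hg with h1 h2
            subst h1
            obtain rfl := eq_of_heq h2
            rcases eq_or_lt_of_le hkj with rfl | hlt
            · have he : d.F.map (homOfLE hkj) = 𝟙 _ := by
                rw [Subsingleton.elim (homOfLE hkj) (𝟙 k), d.F.map_id]
              rw [he, Category.id_comp]
              exact Set.mem_insert _ _
            · exact Set.mem_insert_of_mem _ (hstep k hlt)
          · exact Set.mem_insert_of_mem _ (mcompat j' g hg k hkj)
        · rintro j' g (hg | hg)
          · injection hg with h1 h2
            subst h1
            obtain rfl := eq_of_heq h2
            exact hover
          · exact mover j' g hg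
      exact ⟨gj, hmax.2 hgood (Set.subset_insert _ _) (Set.mem_insert _ _)⟩
    have total : ∀ j : d.J, ∃ g : d.F.obj j ⟶ Xp,
        (⟨j, g⟩ : Σ j : d.J, d.F.obj j ⟶ Xp) ∈ m := by
      intro j
      induction j using WellFoundedLT.induction with
      | _ j IH =>
      choose l hl using IH
      by_cases hbot : j = ⊥
      · subst hbot
        exact ⟨sqt, mbase⟩
      by_cases hlim : Order.IsSuccLimit j
      · obtain ⟨colim⟩ := d.seq.smooth j hlim
        have natl : ∀ (k k' : d.J) (hk : k < j) (hk' : k' < j) (hkk : k ≤ k'),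
            d.F.map (homOfLE hkk) ≫ l k' hk' = l k hk := fun k k' hk hk' hkk =>
          mfun k _ _ (mcompat k' (l k' hk') (hl k' hk') k hkk) (hl k hk)
        let cc : Cocone (restrictLT d.F j) :=
          { pt := Xp
            ι :=
              { app := fun k => l k.1 k.2
                naturality := fun k k' φ => by
                  have hkk : (k : d.J) ≤ (k' : d.J) := leOfHom φ
                  have he : (restrictLT d.F j).map φ = d.F.map (homOfLE hkk) :=
                    congrArg d.F.map (Subsingleton.elim _ _)
                  dsimp
                  exact (congrArg (· ≫ l k'.1 k'.2) he).trans
                    ((natl k.1 k'.1 k.2 k'.2 hkk).trans (Category.comp_id _).symm) } }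
        refine hext j (colim.desc cc) ?_ ?_
        · intro k hkj
          have hfac : d.F.map (homOfLE hkj.le) ≫ colim.desc cc = l k hkj :=
            colim.fac cc ⟨k, hkj⟩
          rw [hfac]
          exact hl k hkj
        · refine colim.hom_ext fun k => ?_
          have h1 : (coconeLT d.F j).ι.app k ≫ colim.desc cc = l k.1 k.2 := colim.fac cc k
          exact (Category.assoc _ _ _).symm.trans (((congrArg (· ≫ p) h1).trans
            (mover _ _ (hl k.1 k.2))).trans
            ((congrArg (· ≫ sqb) (d.c.w (homOfLE k.2.le)).symm).trans (Category.assoc _ _ _)))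
      · have hpre : ¬ Order.IsSuccPrelimit j := fun h =>
          hlim ⟨fun hmin => hbot (hmin.eq_bot), h⟩
        simp only [Order.IsSuccPrelimit, not_forall, not_not] at hpre
        obtain ⟨k, hcov⟩ := hpre
        have hkj : k < j := hcov.lt
        have hnmax : ¬IsMax k := hkj.not_isMax
        have hsucc : Order.succ k = j := hcov.succ_eq
        subst hsucc
        have hlpσ : HasLiftingProperty (d.F.map (homOfLE (Order.le_succ k))) p :=
          hK _ (d.seq.succ_mem k hnmax)
        have sq3 : CommSq (l k hkj) (d.F.map (homOfLE (Order.le_succ k))) p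
            (d.c.ι.app (Order.succ k) ≫ sqb) := ⟨by
          rw [mover _ _ (hl k hkj), ← Category.assoc, d.c.w (homOfLE (Order.le_succ k))]⟩
        obtain ⟨L⟩ := (hlpσ.sq_hasLift sq3).exists_lift
        refine hext _ L.l ?_ L.fac_right
        intro k' hk'
        have hk'k : k' ≤ k := (Order.lt_succ_iff_of_not_isMax hnmax).mp hk'
        have hcomp : d.F.map (homOfLE hk'.le) ≫ L.l
            = d.F.map (homOfLE hk'k) ≫ (d.F.map (homOfLE (Order.le_succ k)) ≫ L.l) := by
          have he : homOfLE hk'.le = homOfLE hk'k ≫ homOfLE (Order.le_succ k) :=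
            Subsingleton.elim _ _
          rw [he, d.F.map_comp, Category.assoc]
        rw [hcomp, L.fac_left]
        exact mcompat k (l k hkj) (hl k hkj) k' hk'k
    choose lf hlf using total
    have CCnat : ∀ {j j' : d.J} (φ : j ⟶ j'), d.F.map φ ≫ lf j' = lf j := by
      intro j j' φ
      rw [Subsingleton.elim φ (homOfLE (leOfHom φ))]
      exact mfun j _ _ (mcompat j' (lf j') (hlf j') j (leOfHom φ)) (hlf j)
    let CC : Cocone d.F :=
      { pt := Xp
        ι :=
          { app := lf
            naturality := fun j j' φ => by
              dsimp
              rw [Category.comp_id, CCnat φ] } }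
    refine CommSq.HasLift.mk' ⟨d.isColimit.desc CC, ?_, ?_⟩
    · rw [d.isColimit.fac CC ⊥]
      exact mfun ⊥ _ _ (hlf ⊥) mbase
    · refine d.isColimit.hom_ext fun j => ?_
      rw [← Category.assoc, d.isColimit.fac CC j]
      exact mover j _ (hlf j)
  haveI := main
  rw [d.fac]
  infer_instance

lemma hlp_of_cell {K : MorphismProperty E} {X Y : E} {f : X ⟶ Y} (hf : cell K f)
    {Xp Yp : E} (p : Xp ⟶ Yp)
    (hK : ∀ ⦃A B : E⦄ (g : A ⟶ B), K g → HasLiftingProperty g p) :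
    HasLiftingProperty f p := by
  obtain ⟨d⟩ := hf
  refine hlp_of_transfinite d p (fun A B g hg => ?_)
  obtain ⟨A', B', g₀, u₀, v₀, hg₀, hpo⟩ := hg
  exact hlp_of_isPushout hpo p (hK g₀ hg₀)

variable {P : D → Prop}

lemma hlp_transfer {A B X Y : ObjectProperty.FullSubcategory P} (f : A ⟶ B) (g : X ⟶ Y) :
    HasLiftingProperty f g ↔
      HasLiftingProperty ((ObjectProperty.ι P).map f)
        ((ObjectProperty.ι P).map g) := by
  constructor
  · intro h
    constructor
    intro t b sq
    have sq' : CommSq (ObjectProperty.homMk (P := P) (X := A) (Y := X) t) f g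
        (ObjectProperty.homMk (P := P) (X := B) (Y := Y) b) :=
      ⟨by ext; simpa using sq.w⟩
    obtain ⟨L⟩ := (h.sq_hasLift sq').exists_lift
    exact CommSq.HasLift.mk' ⟨L.l.hom, by simpa using congrArg (fun φ => φ.hom) L.fac_left,
      by simpa using congrArg (fun φ => φ.hom) L.fac_right⟩
  · intro h
    constructor
    intro t b sq
    have sq' : CommSq
        t.hom
        ((ObjectProperty.ι P).map f) ((ObjectProperty.ι P).map g)
        b.hom :=
      ⟨by simpa using congrArg (fun φ => φ.hom) sq.w⟩
    obtain ⟨L⟩ := (h.sq_hasLift sq').exists_lift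
    exact CommSq.HasLift.mk' ⟨ObjectProperty.homMk L.l, by ext; simpa using L.fac_left,
      by ext; simpa using L.fac_right⟩

lemma rlp_restrict_of_rlp {K : MorphismProperty D} {X Y : ObjectProperty.FullSubcategory P} {f : X ⟶ Y}
    (h : rlp K ((ObjectProperty.ι P).map f)) : rlp (restrict P K) f := by
  intro A B g hg
  exact (hlp_transfer g f).mpr (h _ hg)

lemma rlp_of_rlp_restrict {K : MorphismProperty D}
    (hK : ∀ {A B : D} (g : A ⟶ B), K g → P A ∧ P B)
    {X Y : ObjectProperty.FullSubcategory P} {f : X ⟶ Y} (h : rlp (restrict P K) f) :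
    rlp K ((ObjectProperty.ι P).map f) := by
  intro A B g hg
  obtain ⟨hA, hB⟩ := hK g hg
  exact (hlp_transfer (A := ⟨A, hA⟩) (B := ⟨B, hB⟩) (ObjectProperty.homMk g) f).mp
    (h (A := ⟨A, hA⟩) (B := ⟨B, hB⟩) (ObjectProperty.homMk g) hg)

end Aux

/-- Under the hypotheses of Statement 0, with `W_C` the morphisms of the
coreflective subcategory `C` that are weak equivalences in `D`, the three inclusions of
Hovey's recognition theorem hold in `C`:
(i) relative `J`-cell complexes in `C` are in `W_C` and are `I`-cofibrations in `C`;
(ii) `I`-injective maps of `C` are in `W_C` and are `J`-injective;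
(iii) maps of `C` which are weak equivalences and `J`-injective are `I`-injective. -/
theorem recognition_inclusions_in_coreflective_subcategory
    {D : Type u} [Category.{v} D] [HasLimits D] [HasColimits D]
    (M : ModelStructure D) (I J : MorphismProperty D)
    (hCG : CofibrantlyGenerated M I J)
    (P : D → Prop) [HasLimits (ObjectProperty.FullSubcategory P)] [HasColimits (ObjectProperty.FullSubcategory P)]
    (G : D ⥤ ObjectProperty.FullSubcategory P) (adj : ObjectProperty.ι P ⊣ G)
    (hunit : IsIso adj.unit)
    (hI : ∀ {A B : D} (f : A ⟶ B), I f → P A ∧ P B)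
    (hJ : ∀ {A B : D} (f : A ⟶ B), J f → P A ∧ P B) :
    (∀ {X Y : ObjectProperty.FullSubcategory P} (f : X ⟶ Y), cell (restrict P J) f →
      restrict P M.W f ∧ llp (rlp (restrict P I)) f) ∧
    (∀ {X Y : ObjectProperty.FullSubcategory P} (f : X ⟶ Y), rlp (restrict P I) f →
      restrict P M.W f ∧ rlp (restrict P J) f) ∧
    (∀ {X Y : ObjectProperty.FullSubcategory P} (f : X ⟶ Y), restrict P M.W f → rlp (restrict P J) f →
      rlp (restrict P I) f) := by
  -- transporting relative cell complexes along the colimit-preserving inclusion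
  have hιcell : ∀ {X Y : ObjectProperty.FullSubcategory P} (f : X ⟶ Y), cell (restrict P J) f →
      cell J ((ObjectProperty.ι P).map f) := by
    rintro X Y f ⟨d⟩
    letI := d.instLinearOrder
    letI := d.instOrderBot
    letI := d.instSuccOrder
    letI := d.instWellFoundedLT
    haveI pc1 : PreservesColimitsOfSize.{v, v} (ObjectProperty.ι P) :=
      adj.leftAdjoint_preservesColimits
    haveI pc2 : PreservesColimitsOfSize.{0, 0} (ObjectProperty.ι P) :=
      adj.leftAdjoint_preservesColimits
    haveI : PreservesColimitsOfShape d.J (ObjectProperty.ι P) :=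
      pc1.preservesColimitsOfShape
    haveI : PreservesColimitsOfShape WalkingSpan (ObjectProperty.ι P) :=
      pc2.preservesColimitsOfShape
    refine ⟨{ J := d.J
              F := d.F ⋙ ObjectProperty.ι P
              seq := ⟨?_, ?_⟩
              isoBot := (ObjectProperty.ι P).mapIso d.isoBot
              c := (ObjectProperty.ι P).mapCocone d.c
              isColimit := isColimitOfPreserves _ d.isColimit
              isoTop := (ObjectProperty.ι P).mapIso d.isoTop
              fac := (congrArg (ObjectProperty.ι P).map d.fac).trans (by simp) }⟩
    · intro i hi
      obtain ⟨A, B, g, u', v', hg, hpo⟩ := d.seq.succ_mem i hi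
      exact ⟨A.obj, B.obj, (ObjectProperty.ι P).map g,
        (ObjectProperty.ι P).map u', (ObjectProperty.ι P).map v', hg,
        hpo.map (ObjectProperty.ι P)⟩
    · intro i hi
      haveI : PreservesColimitsOfShape (Set.Iio i) (ObjectProperty.ι P) :=
        pc1.preservesColimitsOfShape
      obtain ⟨hc⟩ := d.seq.smooth i hi
      exact ⟨IsColimit.ofIsoColimit (isColimitOfPreserves (ObjectProperty.ι P) hc)
        (Cocones.ext (Iso.refl _) (fun k => Category.comp_id _))⟩
  -- relative `J`-cell complexes in `D` are weak equivalences
  have cellJ_W : ∀ {X Y : D} (f : X ⟶ Y), cell J f → M.W f := by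
    intro X Y f hf
    obtain ⟨Z, i, q, hiCof, hiW, hqFib, hfac⟩ := M.fact_trivCof_fib f
    have hlp : HasLiftingProperty f q :=
      hlp_of_cell hf q (fun A B g hg => ((hCG.fib_eq q).mp hqFib) g hg)
    have sq : CommSq i f q (𝟙 Y) := ⟨by rw [Category.comp_id, hfac]⟩
    obtain ⟨L⟩ := (hlp.sq_hasLift sq).exists_lift
    refine M.w_retract f i ⟨Arrow.homMk (u := 𝟙 X) (v := L.l) (by simp [L.fac_left]),
      Arrow.homMk (u := 𝟙 X) (v := q) (by simp [hfac]), ?_⟩ hiW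
    apply CommaMorphism.ext
    · simp
    · simpa using L.fac_right
  -- part (ii)
  have part2 : ∀ {X Y : ObjectProperty.FullSubcategory P} (f : X ⟶ Y), rlp (restrict P I) f →
      restrict P M.W f ∧ rlp (restrict P J) f := by
    intro X Y f hf
    have hrI : rlp I ((ObjectProperty.ι P).map f) :=
      rlp_of_rlp_restrict (fun g hg => hI g hg) hf
    have htf := (hCG.trivFib_eq _).mpr hrI
    refine ⟨htf.2, ?_⟩
    have hrJ : rlp J ((ObjectProperty.ι P).map f) := (hCG.fib_eq _).mp htf.1
    exact rlp_restrict_of_rlp hrJ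
  -- part (iii)
  have part3 : ∀ {X Y : ObjectProperty.FullSubcategory P} (f : X ⟶ Y), restrict P M.W f →
      rlp (restrict P J) f → rlp (restrict P I) f := by
    intro X Y f hW hrJ
    have hrJ' : rlp J ((ObjectProperty.ι P).map f) :=
      rlp_of_rlp_restrict (fun g hg => hJ g hg) hrJ
    have hFib := (hCG.fib_eq _).mpr hrJ'
    have hrI : rlp I ((ObjectProperty.ι P).map f) :=
      (hCG.trivFib_eq _).mp ⟨hFib, hW⟩
    exact rlp_restrict_of_rlp hrI
  refine ⟨?_, fun f hf => part2 f hf, fun f hW hJf => part3 f hW hJf⟩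
  intro X Y f hcell
  constructor
  · exact cellJ_W _ (hιcell f hcell)
  · intro A B q hq
    have hrJq : rlp (restrict P J) q := (part2 q hq).2
    exact hlp_of_cell hcell q (fun A' B' g hg => hrJq g hg)

end Paper
end
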